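/- For all indices 0 ≤ t₀ ≤ t₁ ≤ t ≤ T−2, the closed-loop transition matrices of the truncated Riccati recursion satisfy ‖(A + BK_{t₁|t})(A + BK_{t₁−1|t})···(A + BK_{t₀|t})‖ ≤ C·η^{t₁−t₀+1}, where C := λ_max(P̄_max)/λ_min(Q̄_min) and η := √(1 − λ_min(Q̄_min)/λ_max(P̄_max)). -/

import Mathlib

open Matrix Finset
open scoped Matrix.Norms.L2Operator

noncomputable section

/-- Euclidean norm of a real vector. -/
def enorm {k : ℕ} (x : Fin k → ℝ) : ℝ := ‖(WithLp.equiv 2 (Fin k → ℝ)).symm x‖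

/-- Largest eigenvalue (supremum of the real spectrum) of a square real matrix. -/
def lmax {k : ℕ} (M : Matrix (Fin k) (Fin k) ℝ) : ℝ := sSup (spectrum ℝ M)

/-- Smallest eigenvalue (infimum of the real spectrum) of a square real matrix. -/
def lmin {k : ℕ} (M : Matrix (Fin k) (Fin k) ℝ) : ℝ := sInf (spectrum ℝ M)

variable {n m : ℕ}

/-- The LQR feedback gain associated with cost matrix `R` and value matrix `P'`. -/
def gainK (A : Matrix (Fin n) (Fin n) ℝ) (B : Matrix (Fin n) (Fin m) ℝ)
    (R : Matrix (Fin m) (Fin m) ℝ) (P' : Matrix (Fin n) (Fin n) ℝ) :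
    Matrix (Fin m) (Fin n) ℝ :=
  -((R + Bᵀ * P' * B)⁻¹ * Bᵀ * P' * A)

/-- One backwards Riccati step. -/
def ricStep (A : Matrix (Fin n) (Fin n) ℝ) (B : Matrix (Fin n) (Fin m) ℝ)
    (R : Matrix (Fin m) (Fin m) ℝ) (Q P' : Matrix (Fin n) (Fin n) ℝ) :
    Matrix (Fin n) (Fin n) ℝ :=
  Aᵀ * P' * A + Q + Aᵀ * P' * B * gainK A B R P'

/-- Truncated cost matrices `Q_{i|s}`. -/
def trunc {N : Type*} (Q : ℕ → N) (i s : ℕ) : N := if i ≤ s then Q i else Q s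

/-- Backwards truncated Riccati recursion: `ricBackTr A B T Q R s d = P_{T-1-d|s}`. -/
def ricBackTr (A : Matrix (Fin n) (Fin n) ℝ) (B : Matrix (Fin n) (Fin m) ℝ) (T : ℕ)
    (Q : ℕ → Matrix (Fin n) (Fin n) ℝ) (R : ℕ → Matrix (Fin m) (Fin m) ℝ) (s : ℕ) :
    ℕ → Matrix (Fin n) (Fin n) ℝ
  | 0 => trunc Q (T - 1) s
  | d + 1 => ricStep A B (trunc R (T - 2 - d) s) (trunc Q (T - 2 - d) s)
      (ricBackTr A B T Q R s d)

/-- `Pts A B T Q R i s = P_{i|s}`, the truncated Riccati value matrix. -/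
def Pts (A : Matrix (Fin n) (Fin n) ℝ) (B : Matrix (Fin n) (Fin m) ℝ) (T : ℕ)
    (Q : ℕ → Matrix (Fin n) (Fin n) ℝ) (R : ℕ → Matrix (Fin m) (Fin m) ℝ) (i s : ℕ) :
    Matrix (Fin n) (Fin n) ℝ :=
  ricBackTr A B T Q R s (T - 1 - i)

/-- `Kts A B T Q R i s = K_{i|s}`, the truncated Riccati gain. -/
def Kts (A : Matrix (Fin n) (Fin n) ℝ) (B : Matrix (Fin n) (Fin m) ℝ) (T : ℕ)
    (Q : ℕ → Matrix (Fin n) (Fin n) ℝ) (R : ℕ → Matrix (Fin m) (Fin m) ℝ) (i s : ℕ) :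
    Matrix (Fin m) (Fin n) ℝ :=
  gainK A B (trunc R i s) (Pts A B T Q R (i + 1) s)

/-- `xts A B T Q R x₀ s i = x_{i|s}`, the predicted trajectory planned with information up to
time `s`. -/
def xts (A : Matrix (Fin n) (Fin n) ℝ) (B : Matrix (Fin n) (Fin m) ℝ) (T : ℕ)
    (Q : ℕ → Matrix (Fin n) (Fin n) ℝ) (R : ℕ → Matrix (Fin m) (Fin m) ℝ)
    (x₀ : Fin n → ℝ) (s : ℕ) : ℕ → Fin n → ℝ
  | 0 => x₀
  | i + 1 => (A + B * Kts A B T Q R i s) *ᵥ xts A B T Q R x₀ s i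


section AuxSpec
variable {k : ℕ}

lemma lmax_spec [Nonempty (Fin k)] {M : Matrix (Fin k) (Fin k) ℝ} (hM : M.IsHermitian) :
    (∀ i, hM.eigenvalues i ≤ lmax M) ∧ ∃ i, lmax M = hM.eigenvalues i := by
  have hr : spectrum ℝ M = Set.range hM.eigenvalues := hM.spectrum_real_eq_range_eigenvalues
  unfold lmax
  rw [hr]
  constructor
  · intro i
    exact le_csSup (Set.finite_range _).bddAbove ⟨i, rfl⟩
  · obtain ⟨i, hi⟩ := (Set.range_nonempty hM.eigenvalues).csSup_mem (Set.finite_range _)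
    exact ⟨i, hi.symm⟩

lemma lmin_spec [Nonempty (Fin k)] {M : Matrix (Fin k) (Fin k) ℝ} (hM : M.IsHermitian) :
    (∀ i, lmin M ≤ hM.eigenvalues i) ∧ ∃ i, lmin M = hM.eigenvalues i := by
  have hr : spectrum ℝ M = Set.range hM.eigenvalues := hM.spectrum_real_eq_range_eigenvalues
  unfold lmin
  rw [hr]
  constructor
  · intro i
    exact csInf_le (Set.finite_range _).bddBelow ⟨i, rfl⟩
  · obtain ⟨i, hi⟩ := (Set.range_nonempty hM.eigenvalues).csInf_mem (Set.finite_range _)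
    exact ⟨i, hi.symm⟩

lemma psd_smul_one_sub {M : Matrix (Fin k) (Fin k) ℝ} (hM : M.IsHermitian) {c : ℝ}
    (h : ∀ i, hM.eigenvalues i ≤ c) :
    (c • (1 : Matrix (Fin k) (Fin k) ℝ) - M).PosSemidef := by
  set U := (hM.eigenvectorUnitary : Matrix (Fin k) (Fin k) ℝ) with hUdef
  have hU : U * star U = 1 := (Matrix.mem_unitaryGroup_iff).mp hM.eigenvectorUnitary.2
  have key : c • (1 : Matrix (Fin k) (Fin k) ℝ) - M
      = U * diagonal (fun i => c - hM.eigenvalues i) * star U := by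
    have hd : diagonal (fun i => c - hM.eigenvalues i)
        = c • (1 : Matrix (Fin k) (Fin k) ℝ) - diagonal (RCLike.ofReal ∘ hM.eigenvalues) := by
      rw [← diagonal_one, ← diagonal_smul, diagonal_sub]
      funext i j
      simp
    have h1 : U * (c • (1 : Matrix (Fin k) (Fin k) ℝ)
          - diagonal (RCLike.ofReal ∘ hM.eigenvalues)) * star U
        = c • (U * star U) - U * diagonal (RCLike.ofReal ∘ hM.eigenvalues) * star U := by
      simp [Matrix.mul_sub, Matrix.sub_mul, mul_smul_comm, smul_mul_assoc]
    rw [hd, h1, hU]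
    exact congrArg (fun X => c • (1 : Matrix (Fin k) (Fin k) ℝ) - X) hM.spectral_theorem
  rw [key, Matrix.star_eq_conjTranspose]
  exact (Matrix.PosSemidef.diagonal (fun i => sub_nonneg.2 (h i))).mul_mul_conjTranspose_same U

lemma psd_sub_smul_one {M : Matrix (Fin k) (Fin k) ℝ} (hM : M.IsHermitian) {c : ℝ}
    (h : ∀ i, c ≤ hM.eigenvalues i) :
    (M - c • (1 : Matrix (Fin k) (Fin k) ℝ)).PosSemidef := by
  set U := (hM.eigenvectorUnitary : Matrix (Fin k) (Fin k) ℝ) with hUdef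
  have hU : U * star U = 1 := (Matrix.mem_unitaryGroup_iff).mp hM.eigenvectorUnitary.2
  have key : M - c • (1 : Matrix (Fin k) (Fin k) ℝ)
      = U * diagonal (fun i => hM.eigenvalues i - c) * star U := by
    have hd : diagonal (fun i => hM.eigenvalues i - c)
        = diagonal (RCLike.ofReal ∘ hM.eigenvalues) - c • (1 : Matrix (Fin k) (Fin k) ℝ) := by
      rw [← diagonal_one, ← diagonal_smul, diagonal_sub]
      funext i j
      simp
    have h1 : U * (diagonal (RCLike.ofReal ∘ hM.eigenvalues)
          - c • (1 : Matrix (Fin k) (Fin k) ℝ)) * star U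
        = U * diagonal (RCLike.ofReal ∘ hM.eigenvalues) * star U - c • (U * star U) := by
      simp [Matrix.mul_sub, Matrix.sub_mul, mul_smul_comm, smul_mul_assoc]
    rw [hd, h1, hU]
    exact congrArg (fun X => X - c • (1 : Matrix (Fin k) (Fin k) ℝ)) hM.spectral_theorem
  rw [key, Matrix.star_eq_conjTranspose]
  exact (Matrix.PosSemidef.diagonal (fun i => sub_nonneg.2 (h i))).mul_mul_conjTranspose_same U

lemma quad_nonneg {M : Matrix (Fin k) (Fin k) ℝ} (hM : M.PosSemidef) (x : Fin k → ℝ) :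
    0 ≤ x ⬝ᵥ (M *ᵥ x) := by
  simpa using hM.dotProduct_mulVec_nonneg x

lemma quad_smul_one (c : ℝ) (x : Fin k → ℝ) :
    x ⬝ᵥ ((c • (1 : Matrix (Fin k) (Fin k) ℝ)) *ᵥ x) = c * (x ⬝ᵥ x) := by
  simp [Matrix.smul_mulVec, dotProduct_smul, smul_eq_mul]

lemma quad_mono {M N : Matrix (Fin k) (Fin k) ℝ} (h : (N - M).PosSemidef) (x : Fin k → ℝ) :
    x ⬝ᵥ (M *ᵥ x) ≤ x ⬝ᵥ (N *ᵥ x) := by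
  have := quad_nonneg h x
  simp only [Matrix.sub_mulVec, dotProduct_sub] at this
  linarith

lemma quad_le_smul_one {M : Matrix (Fin k) (Fin k) ℝ} {c : ℝ}
    (h : (c • (1 : Matrix (Fin k) (Fin k) ℝ) - M).PosSemidef) (x : Fin k → ℝ) :
    x ⬝ᵥ (M *ᵥ x) ≤ c * (x ⬝ᵥ x) := by
  have := quad_mono h x
  rwa [quad_smul_one] at this

lemma smul_one_quad_le {M : Matrix (Fin k) (Fin k) ℝ} {c : ℝ}
    (h : (M - c • (1 : Matrix (Fin k) (Fin k) ℝ)).PosSemidef) (x : Fin k → ℝ) :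
    c * (x ⬝ᵥ x) ≤ x ⬝ᵥ (M *ᵥ x) := by
  have := quad_mono h x
  rwa [quad_smul_one] at this

lemma quad_congr {k l : ℕ} (M : Matrix (Fin k) (Fin k) ℝ) (C : Matrix (Fin k) (Fin l) ℝ)
    (x : Fin l → ℝ) :
    x ⬝ᵥ ((Cᵀ * M * C) *ᵥ x) = (C *ᵥ x) ⬝ᵥ (M *ᵥ (C *ᵥ x)) := by
  rw [← Matrix.mulVec_mulVec, ← Matrix.mulVec_mulVec, Matrix.dotProduct_mulVec x Cᵀ,
    Matrix.vecMul_transpose]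

lemma psd_conj {k l : ℕ} {M : Matrix (Fin k) (Fin k) ℝ} (hM : M.PosSemidef)
    (C : Matrix (Fin k) (Fin l) ℝ) : (Cᵀ * M * C).PosSemidef := by
  have := hM.conjTranspose_mul_mul_same C
  rwa [Matrix.conjTranspose_eq_transpose_of_trivial] at this

end AuxSpec

section AuxAlg
variable {n m : ℕ} (A : Matrix (Fin n) (Fin n) ℝ) (B : Matrix (Fin n) (Fin m) ℝ)
  {R : Matrix (Fin m) (Fin m) ℝ} {P' : Matrix (Fin n) (Fin n) ℝ}

lemma S_posDef (hR : R.PosDef) (hP' : P'.PosSemidef) : (R + Bᵀ * P' * B).PosDef :=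
  hR.add_posSemidef (psd_conj hP' B)

lemma SK_eq (hR : R.PosDef) (hP' : P'.PosSemidef) :
    (R + Bᵀ * P' * B) * gainK A B R P' = -(Bᵀ * P' * A) := by
  have hdet : IsUnit (R + Bᵀ * P' * B).det := isUnit_iff_ne_zero.2 (S_posDef B hR hP').det_pos.ne'
  rw [gainK, Matrix.mul_neg, neg_inj]
  simp only [← Matrix.mul_assoc]
  rw [Matrix.mul_nonsing_inv _ hdet, Matrix.one_mul]

lemma KS_eq (hR : R.PosDef) (hP' : P'.PosSemidef) :
    (gainK A B R P')ᵀ * (R + Bᵀ * P' * B) = -(Aᵀ * P' * B) := by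
  have h := congrArg Matrix.transpose (SK_eq A B hR hP')
  have hPT : P'ᵀ = P' := by
    have := hP'.isHermitian
    rwa [Matrix.IsHermitian, Matrix.conjTranspose_eq_transpose_of_trivial] at this
  have hRT : Rᵀ = R := by
    have := hR.isHermitian
    rwa [Matrix.IsHermitian, Matrix.conjTranspose_eq_transpose_of_trivial] at this
  simp only [Matrix.transpose_mul, Matrix.transpose_add, Matrix.transpose_neg,
    Matrix.transpose_transpose, hPT, hRT] at h
  simp only [← Matrix.mul_assoc] at h ⊢
  exact h

lemma hz_eq (hR : R.PosDef) (hP' : P'.PosSemidef) :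
    R * gainK A B R P' + Bᵀ * P' * B * gainK A B R P' + Bᵀ * P' * A = 0 := by
  have h1 : R * gainK A B R P' + Bᵀ * P' * B * gainK A B R P' = -(Bᵀ * P' * A) := by
    rw [← Matrix.add_mul]
    exact SK_eq A B hR hP'
  rw [h1, neg_add_cancel]

lemma joseph (Q : Matrix (Fin n) (Fin n) ℝ) (hR : R.PosDef) (hP' : P'.PosSemidef) :
    ricStep A B R Q P' = Q + (gainK A B R P')ᵀ * R * gainK A B R P'
      + (A + B * gainK A B R P')ᵀ * P' * (A + B * gainK A B R P') := by
  set K := gainK A B R P' with hKdef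
  have hz := hz_eq A B hR hP'
  rw [ricStep, ← hKdef]
  calc Aᵀ * P' * A + Q + Aᵀ * P' * B * K
      = Aᵀ * P' * A + Q + Aᵀ * P' * B * K
        + Kᵀ * (R * K + Bᵀ * P' * B * K + Bᵀ * P' * A) := by
        rw [hz, Matrix.mul_zero, add_zero]
    _ = Q + Kᵀ * R * K + (A + B * K)ᵀ * P' * (A + B * K) := by
        simp only [Matrix.transpose_add, Matrix.transpose_mul, Matrix.add_mul, Matrix.mul_add,
          Matrix.mul_assoc]
        abel

lemma ricStep_le (Q : Matrix (Fin n) (Fin n) ℝ) (hR : R.PosDef) (hP' : P'.PosSemidef)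
    (K' : Matrix (Fin m) (Fin n) ℝ) :
    (Q + K'ᵀ * R * K' + (A + B * K')ᵀ * P' * (A + B * K') - ricStep A B R Q P').PosSemidef := by
  have hPT : P'ᵀ = P' := by
    have := hP'.isHermitian
    rwa [Matrix.IsHermitian, Matrix.conjTranspose_eq_transpose_of_trivial] at this
  have hRT : Rᵀ = R := by
    have := hR.isHermitian
    rwa [Matrix.IsHermitian, Matrix.conjTranspose_eq_transpose_of_trivial] at this
  set K := gainK A B R P' with hKdef
  have hz := hz_eq A B hR hP'
  have key : Q + K'ᵀ * R * K' + (A + B * K')ᵀ * P' * (A + B * K') - ricStep A B R Q P'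
      = (K' - K)ᵀ * (R + Bᵀ * P' * B) * (K' - K) := by
    rw [joseph A B Q hR hP', ← hKdef]
    have hK' : K' = K + (K' - K) := by abel
    set D := K' - K with hDdef
    rw [hK']
    calc Q + (K + D)ᵀ * R * (K + D) + (A + B * (K + D))ᵀ * P' * (A + B * (K + D))
          - (Q + Kᵀ * R * K + (A + B * K)ᵀ * P' * (A + B * K))
        = Dᵀ * (R * K + Bᵀ * P' * B * K + Bᵀ * P' * A)
          + (R * K + Bᵀ * P' * B * K + Bᵀ * P' * A)ᵀ * D
          + Dᵀ * ((R + Bᵀ * P' * B) * D) := by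
          simp only [Matrix.transpose_add, Matrix.transpose_mul, Matrix.add_mul, Matrix.mul_add,
            Matrix.mul_assoc, Matrix.transpose_transpose, hPT, hRT]
          abel
      _ = Dᵀ * (R + Bᵀ * P' * B) * D := by
          rw [hz, Matrix.mul_zero, Matrix.transpose_zero, Matrix.zero_mul, zero_add, zero_add,
            ← Matrix.mul_assoc]
  rw [key]
  exact psd_conj (S_posDef B hR hP').posSemidef (K' - K)

lemma ricStep_mono {R' : Matrix (Fin m) (Fin m) ℝ} {P'' Q Q' : Matrix (Fin n) (Fin n) ℝ}
    (hR : R.PosDef) (hP' : P'.PosSemidef)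
    (hdR : (R' - R).PosSemidef) (hdQ : (Q' - Q).PosSemidef) (hdP : (P'' - P').PosSemidef) :
    (ricStep A B R' Q' P'' - ricStep A B R Q P').PosSemidef := by
  have hR' : R'.PosDef := by
    have := hR.add_posSemidef hdR
    rwa [add_sub_cancel] at this
  have hP'' : P''.PosSemidef := by
    have := hP'.add hdP
    rwa [add_sub_cancel] at this
  set K := gainK A B R' P'' with hKdef
  have key : ricStep A B R' Q' P'' - ricStep A B R Q P'
      = (Q' - Q) + Kᵀ * (R' - R) * K + (A + B * K)ᵀ * (P'' - P') * (A + B * K)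
        + (Q + Kᵀ * R * K + (A + B * K)ᵀ * P' * (A + B * K) - ricStep A B R Q P') := by
    rw [joseph A B Q' hR' hP'', ← hKdef]
    simp only [Matrix.sub_mul, Matrix.mul_sub]
    abel
  rw [key]
  exact ((hdQ.add (psd_conj hdR K)).add
    (psd_conj hdP (A + B * K))).add (ricStep_le A B Q hR hP' K)

end AuxAlg

section AuxNorm
variable {k : ℕ}

lemma l2norm_sq (v : Fin k → ℝ) : ‖(WithLp.equiv 2 (Fin k → ℝ)).symm v‖ ^ 2 = v ⬝ᵥ v := by
  rw [EuclideanSpace.norm_eq, Real.sq_sqrt (by positivity)]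
  simp [dotProduct, Real.norm_eq_abs, sq_abs, pow_two]

lemma opnorm_le_of {M : Matrix (Fin k) (Fin k) ℝ} {c : ℝ} (hc : 0 ≤ c)
    (h : ∀ x : Fin k → ℝ, ‖(WithLp.equiv 2 (Fin k → ℝ)).symm (M *ᵥ x)‖
      ≤ c * ‖(WithLp.equiv 2 (Fin k → ℝ)).symm x‖) : ‖M‖ ≤ c := by
  rw [Matrix.l2_opNorm_def]
  refine ContinuousLinearMap.opNorm_le_bound _ hc fun x => ?_
  have h2 := h (WithLp.equiv 2 (Fin k → ℝ) x)
  rw [Equiv.symm_apply_apply] at h2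
  exact h2

end AuxNorm

/-- Exponential stability of the closed-loop transition matrices of the truncated Riccati
recursion: `‖(A + BK_{t₁|t})⋯(A + BK_{t₀|t})‖ ≤ C·η^{t₁−t₀+1}`. -/
theorem truncated_riccati_closed_loop_contraction {n m : ℕ} (hn : 1 ≤ n) (hm : 1 ≤ m)
    (A : Matrix (Fin n) (Fin n) ℝ) (B : Matrix (Fin n) (Fin m) ℝ)
    (T : ℕ) (hT : 2 ≤ T)
    (Q : ℕ → Matrix (Fin n) (Fin n) ℝ) (R : ℕ → Matrix (Fin m) (Fin m) ℝ)
    (hQ : ∀ t ≤ T - 1, (Q t).PosSemidef) (hR : ∀ t ≤ T - 2, (R t).PosDef)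
    (Qmin Qmax : Matrix (Fin n) (Fin n) ℝ) (Rmin Rmax : Matrix (Fin m) (Fin m) ℝ)
    (hQminPD : Qmin.PosDef) (hRminPD : Rmin.PosDef)
    (hQmaxH : Qmax.IsHermitian) (hRmaxH : Rmax.IsHermitian)
    (hQlb : ∀ t ≤ T - 1, (Q t - Qmin).PosSemidef)
    (hQub : ∀ t ≤ T - 1, (Qmax - Q t).PosSemidef)
    (hRlb : ∀ t ≤ T - 2, (R t - Rmin).PosSemidef)
    (hRub : ∀ t ≤ T - 2, (Rmax - R t).PosSemidef)
    (Pm : Matrix (Fin n) (Fin n) ℝ) (hPmPD : Pm.PosDef)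
    (hDARE : Pm = Qmax + Aᵀ * Pm * A -
      Aᵀ * Pm * B * (Rmax + Bᵀ * Pm * B)⁻¹ * Bᵀ * Pm * A)
    (C : ℝ) (hC : C = lmax Pm / lmin Qmin)
    (η : ℝ) (hη : η = Real.sqrt (1 - lmin Qmin / lmax Pm)) :
    ∀ t₀ t₁ t : ℕ, t₀ ≤ t₁ → t₁ ≤ t → t ≤ T - 2 →
      ‖((List.range (t₁ + 1 - t₀)).map fun j => A + B * Kts A B T Q R (t₁ - j) t).prod‖ ≤
        C * η ^ (t₁ - t₀ + 1) := by
  haveI hnE : Nonempty (Fin n) := ⟨⟨0, hn⟩⟩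
  intro t₀ t₁ t ht01 ht1t htT
  set lQ := lmin Qmin with hlQ
  set lP := lmax Pm with hlP
  have hQspec := lmin_spec hQminPD.isHermitian
  have hPspec := lmax_spec hPmPD.isHermitian
  have hlQpos : 0 < lQ := by
    obtain ⟨i, hi⟩ := hQspec.2
    rw [hlQ, hi]
    exact hQminPD.eigenvalues_pos i
  have hlPpos : 0 < lP := by
    obtain ⟨i, hi⟩ := hPspec.2
    rw [hlP, hi]
    exact hPmPD.eigenvalues_pos i
  have hQminPSD : (Qmin - lQ • 1).PosSemidef := psd_sub_smul_one hQminPD.isHermitian hQspec.1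
  have hPmax : (lP • (1 : Matrix (Fin n) (Fin n) ℝ) - Pm).PosSemidef :=
    psd_smul_one_sub hPmPD.isHermitian hPspec.1
  have h0T2 : (0:ℕ) ≤ T - 2 := Nat.zero_le _
  have hRmaxPD : Rmax.PosDef := by
    have := (hR 0 h0T2).add_posSemidef (hRub 0 h0T2)
    rwa [add_sub_cancel] at this
  have hfix0 : Pm - Qmax = ricStep A B Rmax 0 Pm := by
    rw [ricStep, gainK]
    nth_rewrite 1 [hDARE]
    simp only [Matrix.mul_neg, add_zero, ← Matrix.mul_assoc]
    abel
  have hPmQmax : (Pm - Qmax).PosSemidef := by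
    rw [hfix0, joseph A B 0 hRmaxPD hPmPD.posSemidef]
    exact ((Matrix.PosSemidef.zero).add
      (psd_conj hRmaxPD.posSemidef _)).add (psd_conj hPmPD.posSemidef _)
  have hfix : ricStep A B Rmax Qmax Pm = Pm := by
    rw [ricStep, gainK]
    conv_rhs => rw [hDARE]
    simp only [Matrix.mul_neg, ← Matrix.mul_assoc]
    abel
  have hTl : t ≤ T - 1 := le_trans htT (by omega)
  have htrQ : ∀ j, (trunc Q j t).PosSemidef ∧ ((trunc Q j t) - Qmin).PosSemidef
      ∧ (Qmax - trunc Q j t).PosSemidef := by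
    intro j
    unfold trunc
    split
    · next hle => exact ⟨hQ j (by omega), hQlb j (by omega), hQub j (by omega)⟩
    · exact ⟨hQ t hTl, hQlb t hTl, hQub t hTl⟩
  have htrR : ∀ j, (trunc R j t).PosDef ∧ ((trunc R j t) - Rmin).PosSemidef
      ∧ (Rmax - trunc R j t).PosSemidef := by
    intro j
    unfold trunc
    split
    · next hle => exact ⟨hR j (by omega), hRlb j (by omega), hRub j (by omega)⟩
    · exact ⟨hR t htT, hRlb t htT, hRub t htT⟩
  have inv : ∀ d, ((ricBackTr A B T Q R t d) - Qmin).PosSemidef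
      ∧ (Pm - ricBackTr A B T Q R t d).PosSemidef := by
    intro d
    induction d with
    | zero =>
      refine ⟨(htrQ (T-1)).2.1, ?_⟩
      have := hPmQmax.add (htrQ (T-1)).2.2
      rwa [sub_add_sub_cancel] at this
    | succ d ih =>
      have hPd : (ricBackTr A B T Q R t d).PosSemidef := by
        have := hQminPD.posSemidef.add ih.1
        rwa [add_sub_cancel] at this
      have hstep : ricBackTr A B T Q R t (d+1)
          = ricStep A B (trunc R (T-2-d) t) (trunc Q (T-2-d) t) (ricBackTr A B T Q R t d) := rfl
      constructor
      · rw [hstep, joseph A B _ (htrR (T-2-d)).1 hPd]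
        have key : ∀ (Z X Y W : Matrix (Fin n) (Fin n) ℝ), Z + X + Y - W = (Z - W) + X + Y := by
          intros; abel
        rw [key]
        exact (((htrQ (T-2-d)).2.1.add (psd_conj (htrR (T-2-d)).1.posSemidef _)).add
          (psd_conj hPd _))
      · rw [hstep, ← hfix]
        exact ricStep_mono A B (htrR (T-2-d)).1 hPd (htrR (T-2-d)).2.2 (htrQ (T-2-d)).2.2 ih.2
  set Pt : ℕ → Matrix (Fin n) (Fin n) ℝ := fun i => Pts A B T Q R i t with hPtdef
  have invP : ∀ i, ((Pt i) - Qmin).PosSemidef ∧ (Pm - Pt i).PosSemidef := fun i => inv (T-1-i)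
  have hPtPSD : ∀ i, (Pt i).PosSemidef := by
    intro i
    have := hQminPD.posSemidef.add (invP i).1
    rwa [add_sub_cancel] at this
  have hrec : ∀ i, i ≤ T-2 → Pt i = ricStep A B (trunc R i t) (trunc Q i t) (Pt (i+1)) := by
    intro i hi
    show ricBackTr A B T Q R t (T-1-i) = _
    rw [show T-1-i = (T-2-i)+1 from by omega]
    show ricStep A B (trunc R (T-2-(T-2-i)) t) (trunc Q (T-2-(T-2-i)) t)
      (ricBackTr A B T Q R t (T-2-i)) = _
    rw [show T-2-(T-2-i) = i from by omega, show T-2-i = T-1-(i+1) from by omega]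
    rfl
  set ρ := lQ / lP with hρdef
  have hρpos : 0 ≤ ρ := le_of_lt (div_pos hlQpos hlPpos)
  have hρlP : ρ * lP = lQ := div_mul_cancel₀ _ hlPpos.ne'
  have hPmQmin : (Pm - Qmin).PosSemidef := by
    have h1 := hPmQmax.add (hQub 0 (Nat.zero_le _))
    rw [sub_add_sub_cancel] at h1
    have h2 := h1.add (hQlb 0 (Nat.zero_le _))
    rwa [sub_add_sub_cancel] at h2
  have hlQlP : lQ ≤ lP := by
    set x : Fin n → ℝ := Pi.single ⟨0, hn⟩ 1 with hx
    have hxx : x ⬝ᵥ x = 1 := by simp [hx, dotProduct, Pi.single_apply]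
    have h1 := smul_one_quad_le hQminPSD x
    have h2 := quad_mono hPmQmin x
    have h3 := quad_le_smul_one hPmax x
    rw [hxx] at h1 h3
    linarith
  have h1ρ : 0 ≤ 1 - ρ := by
    have : ρ ≤ 1 := (div_le_one hlPpos).2 hlQlP
    linarith
  have qub : ∀ i (x : Fin n → ℝ), x ⬝ᵥ (Pt i *ᵥ x) ≤ lP * (x ⬝ᵥ x) := by
    intro i x
    refine quad_le_smul_one ?_ x
    have := hPmax.add (invP i).2
    rwa [sub_add_sub_cancel] at this
  have qlbQ : ∀ i (x : Fin n → ℝ), lQ * (x ⬝ᵥ x) ≤ x ⬝ᵥ (Pt i *ᵥ x) := by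
    intro i x
    refine smul_one_quad_le ?_ x
    have := (invP i).1.add hQminPSD
    rwa [sub_add_sub_cancel] at this
  have step : ∀ i, i ≤ T-2 → ∀ x : Fin n → ℝ,
      ((A + B * Kts A B T Q R i t) *ᵥ x) ⬝ᵥ (Pt (i+1) *ᵥ ((A + B * Kts A B T Q R i t) *ᵥ x))
        ≤ (1 - ρ) * (x ⬝ᵥ (Pt i *ᵥ x)) := by
    intro i hi x
    have hjos := joseph A B (trunc Q i t) (htrR i).1 (hPtPSD (i+1))
    rw [← hrec i hi] at hjos
    have hK : gainK A B (trunc R i t) (Pt (i+1)) = Kts A B T Q R i t := rfl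
    rw [hK] at hjos
    set cl := A + B * Kts A B T Q R i t with hcl
    set KK := Kts A B T Q R i t with hKK
    have e1 : (cl *ᵥ x) ⬝ᵥ (Pt (i+1) *ᵥ (cl *ᵥ x)) = x ⬝ᵥ ((clᵀ * Pt (i+1) * cl) *ᵥ x) :=
      (quad_congr _ _ x).symm
    have e2 := congrArg (fun M => x ⬝ᵥ (M *ᵥ x)) hjos
    simp only [Matrix.add_mulVec, dotProduct_add] at e2
    have hQtr : ρ * (x ⬝ᵥ (Pt i *ᵥ x)) ≤ x ⬝ᵥ (trunc Q i t *ᵥ x) := by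
      have h1 := qub i x
      have h2 := smul_one_quad_le hQminPSD x
      have h3 := quad_mono (htrQ i).2.1 x
      have h4 := mul_le_mul_of_nonneg_left h1 hρpos
      rw [← mul_assoc, hρlP] at h4
      linarith
    have hKR : 0 ≤ x ⬝ᵥ ((KKᵀ * trunc R i t * KK) *ᵥ x) :=
      quad_nonneg (psd_conj (htrR i).1.posSemidef _) x
    rw [e1]
    linarith
  have hL : ∀ j, ((List.range (j+1)).map fun i => A + B * Kts A B T Q R (t₁ - i) t).prod
      = ((List.range j).map fun i => A + B * Kts A B T Q R (t₁ - i) t).prod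
        * (A + B * Kts A B T Q R (t₁ - j) t) := by
    intro j
    rw [List.range_succ, List.map_append, List.prod_append]
    simp
  have iter : ∀ j, j ≤ t₁ - t₀ + 1 → ∀ x : Fin n → ℝ,
      (((List.range j).map fun i => A + B * Kts A B T Q R (t₁ - i) t).prod *ᵥ x)
        ⬝ᵥ (Pt (t₁+1) *ᵥ (((List.range j).map fun i => A + B * Kts A B T Q R (t₁ - i) t).prod *ᵥ x))
        ≤ (1-ρ)^j * (x ⬝ᵥ (Pt (t₁+1-j) *ᵥ x)) := by
    intro j
    induction j with
    | zero => intro _ x; simp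
    | succ j ih =>
      intro hj x
      rw [hL j, ← Matrix.mulVec_mulVec]
      have h1 := ih (by omega) ((A + B * Kts A B T Q R (t₁ - j) t) *ᵥ x)
      have h2 := step (t₁ - j) (by omega) x
      rw [show t₁ - j + 1 = t₁ + 1 - j from by omega] at h2
      have h3 := mul_le_mul_of_nonneg_left h2 (pow_nonneg h1ρ j)
      calc (((List.range j).map fun i => A + B * Kts A B T Q R (t₁ - i) t).prod *ᵥ
              ((A + B * Kts A B T Q R (t₁ - j) t) *ᵥ x))
            ⬝ᵥ (Pt (t₁+1) *ᵥ (((List.range j).map fun i => A + B * Kts A B T Q R (t₁ - i) t).prod *ᵥ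
              ((A + B * Kts A B T Q R (t₁ - j) t) *ᵥ x))) ≤ _ := h1
        _ ≤ (1-ρ)^j * ((1-ρ) * (x ⬝ᵥ (Pt (t₁ - j) *ᵥ x))) := h3
        _ = (1-ρ)^(j+1) * (x ⬝ᵥ (Pt (t₁+1-(j+1)) *ᵥ x)) := by
            rw [show t₁+1-(j+1) = t₁-j from by omega]
            ring
  set kk := t₁ - t₀ + 1 with hkk
  have hC1 : 1 ≤ C := by
    rw [hC]
    exact (one_le_div hlQpos).2 hlQlP
  have hCpos : 0 < C := lt_of_lt_of_le one_pos hC1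
  have hηnn : 0 ≤ η := hη ▸ Real.sqrt_nonneg _
  have hηsq : η^2 = 1 - ρ := by
    rw [hη]
    exact Real.sq_sqrt h1ρ
  have hpow : (1-ρ)^kk = (η^kk)^2 := by
    rw [← hηsq, ← pow_mul, ← pow_mul, Nat.mul_comm]
  have hlPC : lP = C * lQ := by
    rw [hC]
    field_simp
  rw [show t₁ + 1 - t₀ = kk from by omega]
  refine opnorm_le_of (by positivity) ?_
  intro x
  set Φ := ((List.range kk).map fun i => A + B * Kts A B T Q R (t₁ - i) t).prod with hΦ
  set y := Φ *ᵥ x with hy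
  have h1 : lQ * (y ⬝ᵥ y) ≤ y ⬝ᵥ (Qmin *ᵥ y) := smul_one_quad_le hQminPSD y
  have h2 : y ⬝ᵥ (Qmin *ᵥ y) ≤ y ⬝ᵥ (Pt (t₁+1) *ᵥ y) := quad_mono (invP (t₁+1)).1 y
  have h3 := iter kk (le_refl _) x
  rw [show t₁ + 1 - kk = t₀ from by omega] at h3
  have h4 := qub t₀ x
  have h5 : (1-ρ)^kk * (x ⬝ᵥ (Pt t₀ *ᵥ x)) ≤ (1-ρ)^kk * (lP * (x ⬝ᵥ x)) :=
    mul_le_mul_of_nonneg_left h4 (pow_nonneg h1ρ kk)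
  have hmain : lQ * (y ⬝ᵥ y) ≤ (1-ρ)^kk * (lP * (x ⬝ᵥ x)) := le_trans h1 (le_trans h2
    (le_trans h3 h5))
  have ha2 : ‖(WithLp.equiv 2 (Fin n → ℝ)).symm y‖ ^ 2 = y ⬝ᵥ y := l2norm_sq y
  have hb2 : ‖(WithLp.equiv 2 (Fin n → ℝ)).symm x‖ ^ 2 = x ⬝ᵥ x := l2norm_sq x
  set a := ‖(WithLp.equiv 2 (Fin n → ℝ)).symm y‖ with hadef
  set b := ‖(WithLp.equiv 2 (Fin n → ℝ)).symm x‖ with hbdef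
  clear h1 h2 h3 h4 h5 iter step hL hrec inv invP hPtPSD qub qlbQ htrQ htrR
  have hfin : a^2 ≤ (C * η^kk * b)^2 := by
    rw [hpow, hlPC] at hmain
    rw [← ha2, ← hb2] at hmain
    have hq : a^2 ≤ C * (η^kk)^2 * b^2 := by
      have h6 : lQ * a^2 ≤ lQ * (C * (η^kk)^2 * b^2) := by linarith [hmain]
      exact (mul_le_mul_iff_right₀ hlQpos).1 h6
    have hCsq : C ≤ C^2 := by
      have h7 := mul_le_mul_of_nonneg_left hC1 hCpos.le
      rw [mul_one] at h7
      rw [pow_two]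
      exact h7
    have hCC : C * (η^kk)^2 * b^2 ≤ C^2 * (η^kk)^2 * b^2 :=
      mul_le_mul_of_nonneg_right (mul_le_mul_of_nonneg_right hCsq (sq_nonneg _)) (sq_nonneg _)
    calc a^2 ≤ C * (η^kk)^2 * b^2 := hq
      _ ≤ C^2 * (η^kk)^2 * b^2 := hCC
      _ = (C * η^kk * b)^2 := by ring
  have h8 := Real.sqrt_le_sqrt hfin
  have hcb : 0 ≤ C * η^kk * b := mul_nonneg (mul_nonneg hCpos.le (pow_nonneg hηnn _))
    (hbdef ▸ norm_nonneg _)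
  rwa [Real.sqrt_sq (hadef ▸ norm_nonneg _), Real.sqrt_sq hcb] at h8


end
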